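/- If B and D are subsets of Z_p (p an odd prime) such that every difference of two elements of B is zero or a nonzero quadratic residue, every element of D is a quadratic non-residue, and every difference of two elements of D is zero or a nonzero quadratic residue, then |B|·(|B|-1)·|D| ≤ |B|·(p-1)/2; in particular if B and D are nonempty, |B| ≤ 1 + (p-1)/(2|D|). -/

import Mathlib

open scoped Classical

theorem stmt_0 (p : ℕ) (hp : p.Prime) (hodd : p ≠ 2)
    (B D : Finset (ZMod p))
    (hB : ∀ a ∈ B, ∀ b ∈ B, a - b = 0 ∨ (a - b ≠ 0 ∧ IsSquare (a - b)))
    (hD : ∀ d ∈ D, d ≠ 0 ∧ ¬ IsSquare d)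
    (hDD : ∀ d ∈ D, ∀ d' ∈ D, d - d' = 0 ∨ (d - d' ≠ 0 ∧ IsSquare (d - d'))) :
    (B.card : ℚ) * ((B.card : ℚ) - 1) * D.card ≤ (B.card : ℚ) * ((p : ℚ) - 1) / 2 ∧
      (B.Nonempty → D.Nonempty →
        (B.card : ℚ) ≤ 1 + ((p : ℚ) - 1) / (2 * D.card)) := by
  haveI : Fact p.Prime := ⟨hp⟩
  have hp3 : 3 ≤ p := by
    have h2 := hp.two_le
    rcases Nat.lt_or_ge p 3 with h | h
    · interval_cases p <;> simp_all
    · exact h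
  have hpq : (3 : ℚ) ≤ (p : ℚ) := by exact_mod_cast hp3
  -- product of a nonzero square and a nonsquare is a nonsquare
  have sq_mul_nonsq : ∀ x d : ZMod p, x ≠ 0 → IsSquare x → ¬ IsSquare d →
      ¬ IsSquare (x * d) := by
    rintro x d hx ⟨a, rfl⟩ hd ⟨c, hc⟩
    have ha : a ≠ 0 := fun h => hx (by simp [h])
    refine hd ⟨c * a⁻¹, ?_⟩
    field_simp
    linear_combination hc
  -- product of two nonsquares is a square
  have nonsq_mul : ∀ x y : ZMod p, ¬ IsSquare x → ¬ IsSquare y → IsSquare (x * y) := by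
    intro x y hx hy
    have hx0 : x ≠ 0 := fun h => hx (by simp [h])
    have hy0 : y ≠ 0 := fun h => hy (by simp [h])
    have h1 : quadraticChar (ZMod p) x = -1 :=
      (quadraticChar_neg_one_iff_not_isSquare).2 hx
    have h2 : quadraticChar (ZMod p) y = -1 :=
      (quadraticChar_neg_one_iff_not_isSquare).2 hy
    have h3 : quadraticChar (ZMod p) (x * y) = 1 := by
      rw [map_mul, h1, h2]; ring
    exact (quadraticChar_one_iff_isSquare (mul_ne_zero hx0 hy0)).1 h3
  set T : Finset (ZMod p) := Finset.univ.filter (fun x => ¬ IsSquare x) with hT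
  set S : Finset (ZMod p) := Finset.univ.filter (fun x => x ≠ 0 ∧ IsSquare x) with hS
  -- key inequality
  have key : ((B.card : ℚ) - 1) * D.card ≤ ((p : ℚ) - 1) / 2 := by
    rcases B.eq_empty_or_nonempty with rfl | ⟨b0, hb0⟩
    · simp only [Finset.card_empty, Nat.cast_zero]
      have : (0 : ℚ) ≤ (D.card : ℚ) := by positivity
      nlinarith
    rcases D.eq_empty_or_nonempty with rfl | ⟨d0, hd0⟩
    · simp only [Finset.card_empty, Nat.cast_zero, mul_zero]
      linarith
    obtain ⟨hd00, hd0ns⟩ := hD d0 hd0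
    have hTcard : (T.card : ℚ) ≤ ((p : ℚ) - 1) / 2 := by
      have hTS : T.card ≤ S.card := by
        apply Finset.card_le_card_of_injOn (fun x => x * d0)
        · intro x hx
          simp only [Finset.mem_coe, hT, Finset.mem_filter, Finset.mem_univ, true_and] at hx
          have hx0 : x ≠ 0 := fun h => hx (by simp [h])
          simp only [Finset.mem_coe, hS, Finset.mem_filter, Finset.mem_univ, true_and]
          exact ⟨mul_ne_zero hx0 hd00, nonsq_mul x d0 hx hd0ns⟩
        · intro x _ y _ hxy
          exact mul_right_cancel₀ hd00 hxy
      have hdisj : Disjoint T S := by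
        rw [Finset.disjoint_left]
        intro x hx hx'
        simp only [hT, Finset.mem_filter, Finset.mem_univ, true_and] at hx
        simp only [hS, Finset.mem_filter, Finset.mem_univ, true_and] at hx'
        exact hx hx'.2
      have hsub : T ∪ S ⊆ Finset.univ.erase 0 := by
        intro x hx
        rcases Finset.mem_union.1 hx with h | h
        · simp only [hT, Finset.mem_filter, Finset.mem_univ, true_and] at h
          exact Finset.mem_erase.2 ⟨fun h0 => h (by simp [h0]), Finset.mem_univ _⟩
        · simp only [hS, Finset.mem_filter, Finset.mem_univ, true_and] at h
          exact Finset.mem_erase.2 ⟨h.1, Finset.mem_univ _⟩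
      have hcard : T.card + S.card ≤ p - 1 := by
        have h1 := Finset.card_le_card hsub
        rw [Finset.card_union_of_disjoint hdisj] at h1
        have h2 : (Finset.univ.erase (0 : ZMod p)).card = p - 1 := by
          rw [Finset.card_erase_of_mem (Finset.mem_univ _)]
          simp [ZMod.card]
        omega
      have h2T : 2 * T.card ≤ p - 1 := by omega
      have h3 : ((2 * T.card : ℕ) : ℚ) ≤ ((p - 1 : ℕ) : ℚ) := by exact_mod_cast h2T
      push_cast [Nat.cast_sub (by omega : 1 ≤ p)] at h3
      linarith
    have hinj : ((B.erase b0) ×ˢ D).card ≤ T.card := by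
      apply Finset.card_le_card_of_injOn (fun q => (q.1 - b0) * q.2)
      · rintro ⟨b, d⟩ hq
        rw [Finset.mem_coe, Finset.mem_product] at hq
        obtain ⟨hb, hd⟩ := hq
        have hbB := Finset.mem_of_mem_erase hb
        have hbne : b ≠ b0 := Finset.ne_of_mem_erase hb
        rcases hB b hbB b0 hb0 with h | ⟨h1, h2⟩
        · exact absurd (sub_eq_zero.1 h) hbne
        simp only [Finset.mem_coe, hT, Finset.mem_filter, Finset.mem_univ, true_and]
        exact sq_mul_nonsq _ _ h1 h2 (hD d hd).2
      · rintro ⟨b1, d1⟩ hq1 ⟨b2, d2⟩ hq2 heq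
        simp only [Finset.mem_coe, Finset.mem_product] at hq1 hq2
        obtain ⟨hb1, hd1⟩ := hq1
        obtain ⟨hb2, hd2⟩ := hq2
        have hb1B := Finset.mem_of_mem_erase hb1
        have hb2B := Finset.mem_of_mem_erase hb2
        have hd10 := (hD d1 hd1).1
        have hd1ns := (hD d1 hd1).2
        simp only at heq
        have hbb : b1 = b2 := by
          by_contra hne
          have hsub : b1 - b2 ≠ 0 := sub_ne_zero.2 hne
          have hsq : IsSquare (b1 - b2) := by
            rcases hB b1 hb1B b2 hb2B with h | ⟨_, h⟩
            · exact absurd h hsub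
            · exact h
          have hns : ¬ IsSquare ((b1 - b2) * d1) :=
            sq_mul_nonsq _ _ hsub hsq hd1ns
          have heq2 : (b1 - b2) * d1 = (b2 - b0) * (d2 - d1) := by
            linear_combination heq
          rcases hDD d2 hd2 d1 hd1 with h | ⟨hdne, hdsq⟩
          · have : (b1 - b2) * d1 = 0 := by rw [heq2, h, mul_zero]
            exact mul_ne_zero hsub hd10 this
          · apply hns
            rw [heq2]
            rcases eq_or_ne (b2 - b0) 0 with h0 | h0
            · rw [h0, zero_mul]; exact ⟨0, by ring⟩
            · have hsq2 : IsSquare (b2 - b0) := by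
                rcases hB b2 hb2B b0 hb0 with h | ⟨_, h⟩
                · exact absurd h h0
                · exact h
              exact hsq2.mul hdsq
        subst hbb
        have hb10 : b1 - b0 ≠ 0 := sub_ne_zero.2 (Finset.ne_of_mem_erase hb1)
        have : d1 = d2 := mul_left_cancel₀ hb10 heq
        simp [this]
    rw [Finset.card_product, Finset.card_erase_of_mem hb0] at hinj
    have hBc : 1 ≤ B.card := Finset.card_pos.2 ⟨b0, hb0⟩
    have : ((B.card - 1) * D.card : ℕ) ≤ (T.card : ℚ) := by exact_mod_cast hinj
    calc ((B.card : ℚ) - 1) * D.card = ((B.card - 1) * D.card : ℕ) := by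
          push_cast [Nat.cast_sub hBc]; ring
      _ ≤ (T.card : ℚ) := this
      _ ≤ ((p : ℚ) - 1) / 2 := hTcard
  constructor
  · have hB0 : (0 : ℚ) ≤ (B.card : ℚ) := by positivity
    nlinarith [key]
  · intro hBne hDne
    have hDc : (1 : ℚ) ≤ (D.card : ℚ) := by
      exact_mod_cast Finset.card_pos.2 hDne
    have hpos : (0 : ℚ) < 2 * D.card := by linarith
    rw [← sub_le_iff_le_add', le_div_iff₀ hpos]
    nlinarith [key]
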